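/- The exponential generating function ∑_{n≥0} b̄_{n+2} x^n/n! equals e^{-x}/(1-x)², where b̄_m is the number of derangements of [m] with exactly one right-to-left minimum (equivalently, those σ with σ(m)=1). -/

import Mathlib

open Finset PowerSeries

/-- `bbar n` is the number of derangements σ of `[n]` (modelled 0-based on
`Fin n`) with σ(n) = 1, i.e. σ maps the last element to the first
(equivalently, with exactly one right-to-left minimum). -/
def bbar (n : ℕ) : ℕ :=
  (Finset.univ.filter (fun σ : Equiv.Perm (Fin n) =>
      (∀ i, σ i ≠ i) ∧ ∀ i : Fin n, i.val = n - 1 → (σ i).val = 0)).card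

open Equiv Function derangements

private lemma h0L (n : ℕ) : (0 : Fin (n+2)) ≠ Fin.last (n+1) := by
  simp [Fin.ext_iff]

/-- conjugating-by-swap step -/
private def swapEquiv (n : ℕ) :
    {σ : Equiv.Perm (Fin (n+2)) // (∀ i, σ i ≠ i) ∧ σ (Fin.last (n+1)) = 0} ≃
    {π : Equiv.Perm (Fin (n+2)) // π (Fin.last (n+1)) = Fin.last (n+1) ∧
       ∀ i, i ≠ 0 → i ≠ Fin.last (n+1) → π i ≠ i} where
  toFun σ := ⟨Equiv.swap 0 (Fin.last (n+1)) * σ.1, by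
    obtain ⟨σ, hder, hL⟩ := σ
    refine ⟨by simp [hL], ?_⟩
    intro i hi0 hiL h
    simp only [Perm.mul_apply] at h
    rw [Equiv.swap_apply_eq_iff, Equiv.swap_apply_of_ne_of_ne hi0 hiL] at h
    exact hder i h⟩
  invFun π := ⟨Equiv.swap 0 (Fin.last (n+1)) * π.1, by
    obtain ⟨π, hL, hd⟩ := π
    constructor
    · intro i h
      simp only [Perm.mul_apply] at h
      rcases eq_or_ne i (Fin.last (n+1)) with rfl | hiL
      · rw [hL, Equiv.swap_apply_right] at h
        exact h0L n h
      rcases eq_or_ne i 0 with rfl | hi0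
      · rw [Equiv.swap_apply_eq_iff, Equiv.swap_apply_left] at h
        exact hiL (π.injective (h.trans hL.symm) ▸ rfl)
      · rw [Equiv.swap_apply_eq_iff, Equiv.swap_apply_of_ne_of_ne hi0 hiL] at h
        exact hd i hi0 hiL h
    · simp [hL]⟩
  left_inv σ := Subtype.ext (by
    simp [← mul_assoc])
  right_inv π := Subtype.ext (by
    simp [← mul_assoc])

private def fixEquiv (n : ℕ) :
    {f : Equiv.Perm {x : Fin (n+2) // x ≠ Fin.last (n+1)} //
        fixedPoints f ⊆ {⟨0, h0L n⟩}} ≃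
    {π : Equiv.Perm (Fin (n+2)) // π (Fin.last (n+1)) = Fin.last (n+1) ∧
       ∀ i, i ≠ 0 → i ≠ Fin.last (n+1) → π i ≠ i} := by
  refine ((Equiv.Perm.subtypeEquivSubtypePerm (fun x => x ≠ Fin.last (n+1))).subtypeEquiv
      (q := fun g => ∀ i, i ≠ 0 → i ≠ Fin.last (n+1) → g.1 i ≠ i) ?_).trans
    ((Equiv.subtypeSubtypeEquivSubtypeInter
      (fun f : Equiv.Perm (Fin (n+2)) => ∀ a, ¬(a ≠ Fin.last (n+1)) → f a = a)
      (fun f => ∀ i, i ≠ 0 → i ≠ Fin.last (n+1) → f i ≠ i)).trans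
      (Equiv.subtypeEquivRight ?_))
  · intro f
    constructor
    · intro hsub i hi0 hiL heq
      rw [show ((Equiv.Perm.subtypeEquivSubtypePerm
            (fun x : Fin (n+2) => x ≠ Fin.last (n+1))) f).1 i = f ⟨i, hiL⟩ from
          Equiv.Perm.ofSubtype_apply_of_mem f hiL] at heq
      have : f ⟨i, hiL⟩ = ⟨i, hiL⟩ := Subtype.ext heq
      have := hsub this
      simp only [Set.mem_singleton_iff, Subtype.ext_iff] at this
      exact hi0 this
    · intro hall x hx
      by_contra hxz
      have hx0 : x.1 ≠ 0 := fun h => hxz (Subtype.ext h)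
      refine hall x.1 hx0 x.2 ?_
      rw [show ((Equiv.Perm.subtypeEquivSubtypePerm
            (fun y : Fin (n+2) => y ≠ Fin.last (n+1))) f).1 x.1 = f ⟨x.1, x.2⟩ from
          Equiv.Perm.ofSubtype_apply_of_mem f x.2]
      rw [show (⟨x.1, x.2⟩ : {y : Fin (n+2) // y ≠ Fin.last (n+1)}) = x from rfl, hx]
  · intro π
    constructor
    · rintro ⟨h1, h2⟩
      exact ⟨h1 _ (not_not_intro rfl), h2⟩
    · rintro ⟨h1, h2⟩
      refine ⟨fun a ha => ?_, h2⟩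
      rw [not_not.mp ha]; exact h1

private lemma bbar_eq (n : ℕ) :
    bbar (n + 2) = numDerangements n + numDerangements (n + 1) := by
  classical
  have h1 : bbar (n+2) =
      Fintype.card {σ : Equiv.Perm (Fin (n+2)) //
        (∀ i, σ i ≠ i) ∧ ∀ i : Fin (n+2), i.val = n + 2 - 1 → (σ i).val = 0} := by
    rw [bbar, Fintype.card_subtype]
  have h2 : Fintype.card {σ : Equiv.Perm (Fin (n+2)) //
        (∀ i, σ i ≠ i) ∧ ∀ i : Fin (n+2), i.val = n + 2 - 1 → (σ i).val = 0}
      = Fintype.card {σ : Equiv.Perm (Fin (n+2)) //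
        (∀ i, σ i ≠ i) ∧ σ (Fin.last (n+1)) = 0} := by
    refine Fintype.card_congr (Equiv.subtypeEquivRight fun σ => ?_)
    refine and_congr_right fun _ => ⟨fun h => Fin.ext (h _ rfl), fun h i hi => ?_⟩
    have : i = Fin.last (n+1) := Fin.ext hi
    subst this; rw [h]; rfl
  rw [h1, h2, Fintype.card_congr ((swapEquiv n).trans (fixEquiv n).symm)]
  rw [Fintype.card_congr (derangements.atMostOneFixedPointEquivSum_derangements
    (⟨0, h0L n⟩ : {x : Fin (n+2) // x ≠ Fin.last (n+1)}))]
  rw [Fintype.card_sum]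
  have hc1 : Fintype.card {x : Fin (n+2) // x ≠ Fin.last (n+1)} = n + 1 := by
    simp [Fintype.card_subtype_compl, Fintype.card_subtype_eq]
  have hc2 : Fintype.card
      (({(⟨0, h0L n⟩ : {x : Fin (n+2) // x ≠ Fin.last (n+1)})}ᶜ :
        Set {x : Fin (n+2) // x ≠ Fin.last (n+1)})) = n := by
    rw [Fintype.card_compl_set]
    simp [hc1]
  rw [card_derangements_eq_numDerangements, card_derangements_eq_numDerangements, hc1, hc2]

private lemma key_int (k : ℕ) :
    ((numDerangements (k+3) : ℤ) + numDerangements (k+2))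
      - 2*(k+2)*((numDerangements (k+2) : ℤ) + numDerangements (k+1))
      + (k+2)*(k+1)*((numDerangements (k+1) : ℤ) + numDerangements k) = (-1)^k := by
  have h3 := numDerangements_succ (k+2)
  have h2 := numDerangements_succ (k+1)
  have h1 := numDerangements_succ k
  push_cast at h3 h2 h1 ⊢
  rw [h3, h2, h1]
  ring_nf

private lemma key_bbar (k : ℕ) :
    (bbar (k+4) : ℚ)
      = 2*(k+2)*(bbar (k+3) : ℚ) - (k+2)*(k+1)*(bbar (k+2) : ℚ) + (-1)^k := by
  have h4 : bbar (k+4) = numDerangements (k+2) + numDerangements (k+3) := bbar_eq (k+2)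
  have h3 : bbar (k+3) = numDerangements (k+1) + numDerangements (k+2) := bbar_eq (k+1)
  have h2 : bbar (k+2) = numDerangements k + numDerangements (k+1) := bbar_eq k
  rw [h4, h3, h2]
  have h : (((numDerangements (k+3) : ℚ) + numDerangements (k+2))
      - 2*(k+2)*((numDerangements (k+2) : ℚ) + numDerangements (k+1))
      + (k+2)*(k+1)*((numDerangements (k+1) : ℚ) + numDerangements k)) = (-1)^k := by
    exact_mod_cast congrArg (Int.cast : ℤ → ℚ) (key_int k)
  push_cast
  linarith [h]

/-- ∑ bbar(n+2) xⁿ/n! = e^{-x}/(1-x)², stated multiplied through by (1-x)². -/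
theorem stmt14 :
    (PowerSeries.mk fun n => (bbar (n + 2) : ℚ) / (n.factorial : ℚ)) *
      (1 - PowerSeries.X) ^ 2
    = PowerSeries.rescale (-1 : ℚ) (PowerSeries.exp ℚ) := by
  set f : ℚ⟦X⟧ := PowerSeries.mk fun n => (bbar (n + 2) : ℚ) / (n.factorial : ℚ) with hf
  have hC : (PowerSeries.C (R := ℚ)) 2 = 2 := map_ofNat _ 2
  have key : f * (1 - PowerSeries.X) ^ 2
      = f - PowerSeries.C (R := ℚ) 2 * (f * PowerSeries.X) + f * PowerSeries.X * PowerSeries.X := by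
    rw [hC]; ring
  have h0 : bbar 2 = 1 := by rw [bbar_eq 0]; rfl
  have h1 : bbar 3 = 1 := by rw [bbar_eq 1]; rfl
  rw [key]
  ext n
  rw [map_add, map_sub, coeff_C_mul, coeff_rescale, coeff_exp]
  match n with
  | 0 => simp [hf, h0]
  | 1 =>
    rw [coeff_succ_mul_X, show (1:ℕ) = 0 + 1 from rfl, coeff_succ_mul_X]
    simp [hf, h0, h1, coeff_zero_mul_X]
    norm_num
  | (k+2) =>
    rw [coeff_succ_mul_X, show k+2 = (k+1)+1 from rfl, coeff_succ_mul_X, coeff_succ_mul_X]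
    simp only [hf, coeff_mk]
    rw [show k+1+1+2 = k+4 from rfl, key_bbar k]
    have hfac1 : ((k+2).factorial : ℚ) = (k+2) * (k+1) * k.factorial := by
      rw [Nat.factorial_succ, Nat.factorial_succ]; push_cast; ring
    have hfac2 : ((k+1).factorial : ℚ) = (k+1) * k.factorial := by
      rw [Nat.factorial_succ]; push_cast; ring
    have hk : (k.factorial : ℚ) ≠ 0 := Nat.cast_ne_zero.mpr k.factorial_ne_zero
    have hk1 : ((k:ℚ)+1) ≠ 0 := by positivity
    have hk2 : ((k:ℚ)+2) ≠ 0 := by positivity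
    rw [show ((k:ℕ)+1+1) = k+2 from rfl, hfac1, hfac2]
    simp only [Algebra.algebraMap_self, RingHom.id_apply]
    field_simp
    ring
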